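/- Let μ be a non-atomic finite measure on a measurable space (T, Σ) and θ a Young function satisfying the Δ₂-condition. Define the modular B(f) = ∫_T θ(|f(t)|) dμ(t) and the Luxemburg norm ‖f‖_θ for measurable f : T → ℝ. Then the Luxemburg norm is locally uniformly convex — i.e. for every measurable f with ‖f‖_θ = 1 and every ε > 0 there exists δ ∈ (0,1) such that every measurable g with ‖g‖_θ = 1 and ‖f − g‖_θ ≥ ε satisfies ‖(f+g)/2‖_θ ≤ 1 − δ — if and only if the modular B is locally uniformly convex — i.e. for every measurable f with B(f) = 1 and every ε > 0 there exists δ ∈ (0,1) such that every measurable g with B(g) = 1 and B(f − g) ≥ ε satisfies B((f+g)/2) ≤ 1 − δ. -/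

import Mathlib

open MeasureTheory Filter Set

set_option linter.unusedSectionVars false
set_option linter.unusedVariables false

section Young
variable {θ χ : ℝ → ℝ}

lemma chi_ii (hχmono : ∀ s t, 0 ≤ s → s ≤ t → χ s ≤ χ t)
    {a b : ℝ} (ha : 0 ≤ a) (hab : a ≤ b) :
    IntervalIntegrable χ volume a b := by
  apply MonotoneOn.intervalIntegrable
  intro x hx y hy hxy
  rw [Set.uIcc_of_le hab] at hx hy
  exact hχmono x y (le_trans ha hx.1) hxy

lemma theta_add (hχmono : ∀ s t, 0 ≤ s → s ≤ t → χ s ≤ χ t)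
    (hθdef : ∀ u, 0 ≤ u → θ u = ∫ t in (0:ℝ)..u, χ t)
    {a b : ℝ} (ha : 0 ≤ a) (hab : a ≤ b) :
    θ b = θ a + ∫ t in a..b, χ t := by
  rw [hθdef a ha, hθdef b (le_trans ha hab),
    intervalIntegral.integral_add_adjacent_intervals (chi_ii hχmono le_rfl ha)
      (chi_ii hχmono ha hab)]

lemma int_chi_le (hχmono : ∀ s t, 0 ≤ s → s ≤ t → χ s ≤ χ t)
    {a b : ℝ} (ha : 0 ≤ a) (hab : a ≤ b) :
    ∫ t in a..b, χ t ≤ (b - a) * χ b := by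
  have := intervalIntegral.integral_mono_on hab (chi_ii hχmono ha hab)
    (intervalIntegrable_const (c := χ b))
    (fun x hx => hχmono x b (le_trans ha hx.1) hx.2)
  simpa using this

lemma le_int_chi (hχmono : ∀ s t, 0 ≤ s → s ≤ t → χ s ≤ χ t)
    {a b : ℝ} (ha : 0 ≤ a) (hab : a ≤ b) :
    (b - a) * χ a ≤ ∫ t in a..b, χ t := by
  have := intervalIntegral.integral_mono_on hab
    (intervalIntegrable_const (c := χ a)) (chi_ii hχmono ha hab)
    (fun x hx => hχmono a x ha hx.1)
  simpa using this

variable (hχ0 : ∀ t, 0 ≤ t → 0 ≤ χ t)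
  (hχmono : ∀ s t, 0 ≤ s → s ≤ t → χ s ≤ χ t)
  (hθdef : ∀ u, 0 ≤ u → θ u = ∫ t in (0:ℝ)..u, χ t)

include hχ0 hχmono hθdef

lemma theta_zero : θ 0 = 0 := by
  rw [hθdef 0 le_rfl, intervalIntegral.integral_same]

lemma theta_nonneg {u : ℝ} (hu : 0 ≤ u) : 0 ≤ θ u := by
  rw [hθdef u hu]
  exact intervalIntegral.integral_nonneg hu (fun x hx => hχ0 x hx.1)

lemma theta_mono {a b : ℝ} (ha : 0 ≤ a) (hab : a ≤ b) : θ a ≤ θ b := by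
  rw [theta_add hχmono hθdef ha hab]
  have : 0 ≤ ∫ t in a..b, χ t :=
    intervalIntegral.integral_nonneg hab (fun x hx => hχ0 x (le_trans ha hx.1))
  linarith

lemma theta_cvx {l s : ℝ} (hl0 : 0 ≤ l) (hl1 : l ≤ 1) (hs : 0 ≤ s) :
    θ (l * s) ≤ l * θ s := by
  have hls0 : 0 ≤ l * s := mul_nonneg hl0 hs
  have hlss : l * s ≤ s := by nlinarith
  have hb1 : θ (l * s) ≤ (l * s) * χ (l * s) := by
    rw [hθdef (l * s) hls0]
    have := int_chi_le hχmono (le_refl (0:ℝ)) hls0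
    simpa using this
  have hb2 : θ (l * s) + (s - l * s) * χ (l * s) ≤ θ s := by
    rw [theta_add hχmono hθdef hls0 hlss]
    have := le_int_chi hχmono hls0 hlss
    linarith
  have hc : 0 ≤ χ (l * s) := hχ0 _ hls0
  nlinarith

section Delta
variable {K : ℝ} (hK1 : 1 ≤ K) (hK : ∀ t, 0 ≤ t → θ (2 * t) ≤ K * θ t)
include hK1 hK

lemma theta_pow (m : ℕ) {u : ℝ} (hu : 0 ≤ u) : θ (2 ^ m * u) ≤ K ^ m * θ u := by
  induction m with
  | zero => simp
  | succ n ih =>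
      have h2 : (2:ℝ) ^ (n+1) * u = 2 * (2 ^ n * u) := by ring
      have hnn : 0 ≤ (2:ℝ) ^ n * u := by positivity
      calc θ (2 ^ (n+1) * u) = θ (2 * (2 ^ n * u)) := by rw [h2]
        _ ≤ K * θ (2 ^ n * u) := hK _ hnn
        _ ≤ K * (K ^ n * θ u) := by
            have := ih
            nlinarith [this]
        _ = K ^ (n+1) * θ u := by ring

lemma theta_scale_low {c s : ℝ} (hc : 0 < c) {m : ℕ} (hm : 1 ≤ 2 ^ m * c)
    (hs : 0 ≤ s) : θ s ≤ K ^ m * θ (c * s) := by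
  have h1 : s ≤ 2 ^ m * (c * s) := by nlinarith
  calc θ s ≤ θ (2 ^ m * (c * s)) :=
        theta_mono hχ0 hχmono hθdef hs h1
    _ ≤ K ^ m * θ (c * s) := theta_pow hχ0 hχmono hθdef hK1 hK m (by positivity)

lemma s_chi_le {s : ℝ} (hs : 0 ≤ s) : s * χ s ≤ (K - 1) * θ s := by
  have h2 : s ≤ 2 * s := by linarith
  have hadd := theta_add hχmono hθdef hs h2
  have hlb := le_int_chi hχmono hs h2
  have := hK s hs
  nlinarith

lemma theta_near_one {l s : ℝ} (hl0 : 0 ≤ l) (hl1 : l ≤ 1) (hs : 0 ≤ s) :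
    θ s ≤ θ (l * s) + (1 - l) * (K - 1) * θ s := by
  have hls0 : 0 ≤ l * s := mul_nonneg hl0 hs
  have hlss : l * s ≤ s := by nlinarith
  have hadd := theta_add hχmono hθdef hls0 hlss
  have hub := int_chi_le hχmono hls0 hlss
  have hd4 := s_chi_le hχ0 hχmono hθdef hK1 hK hs
  have hχs : 0 ≤ χ s := hχ0 s hs
  nlinarith

lemma s_chi2_le {s : ℝ} (hs : 0 ≤ s) : s * χ (2 * s) ≤ K ^ 2 * θ s := by
  have h0 : 0 ≤ 2 * s := by linarith
  have h2 : 2 * s ≤ 2 * (2 * s) := by linarith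
  have hlb := le_int_chi hχmono h0 h2
  have hadd := theta_add hχmono hθdef h0 h2
  have hk1 := hK s hs
  have hk2 := hK (2 * s) h0
  have hθ2 : 0 ≤ θ (2 * s) := theta_nonneg hχ0 hχmono hθdef h0
  have hχ2 : 0 ≤ χ (2 * s) := hχ0 _ h0
  nlinarith

lemma theta_above_one {l s : ℝ} (hl1 : 1 ≤ l) (hl2 : l ≤ 2) (hs : 0 ≤ s) :
    θ (l * s) ≤ (1 + (l - 1) * K ^ 2) * θ s := by
  have hsls : s ≤ l * s := by nlinarith
  have hls2 : l * s ≤ 2 * s := by nlinarith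
  have hadd := theta_add hχmono hθdef hs hsls
  have hub := int_chi_le hχmono hs hsls
  have hmono2 : χ (l * s) ≤ χ (2 * s) := hχmono _ _ (by positivity) hls2
  have hd6 := s_chi2_le hχ0 hχmono hθdef hK1 hK hs
  have hθs : 0 ≤ θ s := theta_nonneg hχ0 hχmono hθdef hs
  have hχls : 0 ≤ χ (l * s) := hχ0 _ (by positivity)
  nlinarith

end Delta
end Young

lemma aux_le_one {b C : ℝ} (hC : 0 ≤ C)
    (h : ∀ e : ℝ, 0 < e → e ≤ 1/2 → b ≤ 1 + e * C) : b ≤ 1 := by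
  by_contra hb
  push_neg at hb
  set e := min (1/2) ((b-1)/(2*(C+1))) with he
  have he0 : 0 < e := lt_min (by norm_num) (div_pos (by linarith) (by positivity))
  have := h e he0 (min_le_left _ _)
  have h2 : e ≤ (b-1)/(2*(C+1)) := min_le_right _ _
  have h3 : e * C ≤ ((b-1)/(2*(C+1))) * C := mul_le_mul_of_nonneg_right h2 hC
  have h4 : ((b-1)/(2*(C+1))) * C < b - 1 := by
    rw [div_mul_eq_mul_div, div_lt_iff₀ (by positivity)]
    nlinarith
  linarith

/-- A Young function: `θ u = ∫₀ᵘ χ(t) dt` for some non-decreasing, left-continuous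
`χ : [0,∞) → [0,∞)` with `χ 0 = 0` which is not identically zero. -/
def IsYoungFunction (θ : ℝ → ℝ) : Prop :=
  ∃ χ : ℝ → ℝ,
    (∀ t, 0 ≤ t → 0 ≤ χ t) ∧
    (∀ s t, 0 ≤ s → s ≤ t → χ s ≤ χ t) ∧
    (∀ t, 0 < t → Tendsto χ (nhdsWithin t (Set.Iio t)) (nhds (χ t))) ∧
    χ 0 = 0 ∧
    (∃ t, 0 ≤ t ∧ χ t ≠ 0) ∧
    (∀ u, 0 ≤ u → θ u = ∫ t in (0:ℝ)..u, χ t)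

/-- The Δ₂-condition: there is `k > 0` with `θ(2t) ≤ k·θ(t)` for all `t ≥ 0`. -/
def Delta2 (θ : ℝ → ℝ) : Prop :=
  ∃ k : ℝ, 0 < k ∧ ∀ t, 0 ≤ t → θ (2 * t) ≤ k * θ t

/-- The Luxemburg norm of `f` with respect to the Young function `θ` and the measure
`μ` : `inf {k > 0 : ∫ θ(‖f‖/k) dμ ≤ 1}`. -/
noncomputable def luxNorm {T X : Type*} [MeasurableSpace T] [NormedAddCommGroup X]
    (θ : ℝ → ℝ) (μ : Measure T) (f : T → X) : ENNReal :=
  sInf {k : ENNReal | 0 < k ∧ k ≠ ⊤ ∧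
    ∫⁻ t, ENNReal.ofReal (θ (‖f t‖ / k.toReal)) ∂μ ≤ 1}

/-- For a non-atomic finite measure and a Young function satisfying Δ₂, the Luxemburg norm
is locally uniformly convex iff the modular `B(f) = ∫ θ(|f|) dμ` is locally uniformly convex. -/
theorem luxNorm_locallyUniformlyConvex_iff_modular {T : Type*} [MeasurableSpace T]
    (μ : Measure T) [IsFiniteMeasure μ]
    (hatomless : ∀ E : Set T, MeasurableSet E → 0 < μ E →
      ∃ F, F ⊆ E ∧ MeasurableSet F ∧ 0 < μ F ∧ μ F < μ E)
    (θ : ℝ → ℝ) (hθ : IsYoungFunction θ) (hΔ : Delta2 θ) :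
    ((∀ f : T → ℝ, Measurable f → luxNorm θ μ f = 1 →
        ∀ ε : ℝ, 0 < ε → ∃ δ : ℝ, 0 < δ ∧ δ < 1 ∧
          ∀ g : T → ℝ, Measurable g → luxNorm θ μ g = 1 →
            ENNReal.ofReal ε ≤ luxNorm θ μ (fun t => f t - g t) →
            luxNorm θ μ (fun t => (f t + g t) / 2) ≤ ENNReal.ofReal (1 - δ)) ↔
      (∀ f : T → ℝ, Measurable f → (∫⁻ t, ENNReal.ofReal (θ |f t|) ∂μ) = 1 →
        ∀ ε : ℝ, 0 < ε → ∃ δ : ℝ, 0 < δ ∧ δ < 1 ∧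
          ∀ g : T → ℝ, Measurable g → (∫⁻ t, ENNReal.ofReal (θ |g t|) ∂μ) = 1 →
            ENNReal.ofReal ε ≤ (∫⁻ t, ENNReal.ofReal (θ |f t - g t|) ∂μ) →
            (∫⁻ t, ENNReal.ofReal (θ (|(f t + g t) / 2|)) ∂μ) ≤ ENNReal.ofReal (1 - δ))) := by
  clear hatomless
  obtain ⟨χ, hχ0, hχmono, -, -, -, hθdef⟩ := hθ
  obtain ⟨k₀, hk₀pos, hk₀⟩ := hΔ
  set K : ℝ := max k₀ 1 with hKdef
  have hK1 : (1:ℝ) ≤ K := le_max_right _ _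
  have hK0 : (0:ℝ) < K := lt_of_lt_of_le one_pos hK1
  have hK : ∀ t, 0 ≤ t → θ (2 * t) ≤ K * θ t := by
    intro t ht
    have h1 := hk₀ t ht
    have h2 := theta_nonneg hχ0 hχmono hθdef ht
    have : k₀ * θ t ≤ K * θ t :=
      mul_le_mul_of_nonneg_right (le_max_left _ _) h2
    linarith
  -- shorthand facts
  have tnn : ∀ {u : ℝ}, 0 ≤ u → 0 ≤ θ u := fun hu => theta_nonneg hχ0 hχmono hθdef hu
  have tmono : ∀ {a b : ℝ}, 0 ≤ a → a ≤ b → θ a ≤ θ b :=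
    fun ha hab => theta_mono hχ0 hχmono hθdef ha hab
  have tcvx : ∀ {l s : ℝ}, 0 ≤ l → l ≤ 1 → 0 ≤ s → θ (l * s) ≤ l * θ s :=
    fun h1 h2 h3 => theta_cvx hχ0 hχmono hθdef h1 h2 h3
  have tlow : ∀ (c s : ℝ) (m : ℕ), 0 < c → 1 ≤ 2 ^ m * c → 0 ≤ s →
      θ s ≤ K ^ m * θ (c * s) :=
    fun c s m hc hm hs => theta_scale_low hχ0 hχmono hθdef hK1 hK hc hm hs
  have tnear : ∀ {l s : ℝ}, 0 ≤ l → l ≤ 1 → 0 ≤ s →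
      θ s ≤ θ (l * s) + (1 - l) * (K - 1) * θ s :=
    fun h1 h2 h3 => theta_near_one hχ0 hχmono hθdef hK1 hK h1 h2 h3
  have tabove : ∀ {l s : ℝ}, 1 ≤ l → l ≤ 2 → 0 ≤ s →
      θ (l * s) ≤ (1 + (l - 1) * K ^ 2) * θ s :=
    fun h1 h2 h3 => theta_above_one hχ0 hχmono hθdef hK1 hK h1 h2 h3
  -- measurability of the integrands
  have hθmeas : ∀ g : T → ℝ, Measurable g →
      Measurable (fun t => ENNReal.ofReal (θ |g t|)) := by
    intro g hg
    have hψm : Monotone (fun u : ℝ => θ (max u 0)) := by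
      intro a b hab
      exact tmono (le_max_right _ _) (max_le_max hab le_rfl)
    have heq : (fun t => ENNReal.ofReal (θ |g t|))
        = fun t => ENNReal.ofReal ((fun u : ℝ => θ (max u 0)) (|g t|)) := by
      funext t
      simp [max_eq_left (abs_nonneg (g t))]
    rw [heq]
    exact ENNReal.measurable_ofReal.comp (hψm.measurable.comp hg.abs)
  have hθmeas' : ∀ (g : T → ℝ), Measurable g → ∀ r : ℝ, 0 < r →
      Measurable (fun t => ENNReal.ofReal (θ (|g t| / r))) := by
    intro g hg r hr
    have := hθmeas (fun t => g t / r) (hg.div_const r)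
    have heq : (fun t => ENNReal.ofReal (θ |g t / r|))
        = fun t => ENNReal.ofReal (θ (|g t| / r)) := by
      funext t
      rw [abs_div, abs_of_pos hr]
    rwa [heq] at this
  -- norm upper bound via membership
  have hNle : ∀ (u : T → ℝ) (r : ℝ), 0 < r →
      (∫⁻ t, ENNReal.ofReal (θ (|u t| / r)) ∂μ) ≤ 1 →
      luxNorm θ μ u ≤ ENNReal.ofReal r := by
    intro u r hr h
    apply sInf_le
    refine ⟨ENNReal.ofReal_pos.2 hr, ENNReal.ofReal_ne_top, ?_⟩
    rw [ENNReal.toReal_ofReal hr.le]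
    simpa [Real.norm_eq_abs] using h
  -- extraction from strict norm bound
  have hNlt : ∀ (u : T → ℝ) (a : ENNReal), luxNorm θ μ u < a →
      ∃ c : ENNReal, 0 < c ∧ c ≠ ⊤ ∧
        (∫⁻ t, ENNReal.ofReal (θ (|u t| / c.toReal)) ∂μ) ≤ 1 ∧ c < a := by
    intro u a ha
    rw [luxNorm, sInf_lt_iff] at ha
    obtain ⟨c, ⟨hc0, hcne, hcint⟩, hclt⟩ := ha
    refine ⟨c, hc0, hcne, ?_, hclt⟩
    simpa [Real.norm_eq_abs] using hcint
  -- modular bounded by scaled modular (convexity)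
  have hBle : ∀ (u : T → ℝ) (c : ℝ), 0 < c → c ≤ 1 →
      (∫⁻ t, ENNReal.ofReal (θ |u t|) ∂μ)
        ≤ ENNReal.ofReal c * ∫⁻ t, ENNReal.ofReal (θ (|u t| / c)) ∂μ := by
    intro u c hc0 hc1
    rw [← lintegral_const_mul' _ _ ENNReal.ofReal_ne_top]
    refine lintegral_mono fun t => ?_
    rw [← ENNReal.ofReal_mul hc0.le]
    apply ENNReal.ofReal_le_ofReal
    have hceq : c * (|u t| / c) = |u t| := by field_simp
    calc θ (|u t|) = θ (c * (|u t| / c)) := by rw [hceq]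
      _ ≤ c * θ (|u t| / c) := tcvx hc0.le hc1 (by positivity)
  -- modular strict bound from norm strict bound
  have hmodlt : ∀ (u : T → ℝ) (r : ℝ), 0 < r → r ≤ 1 →
      luxNorm θ μ u < ENNReal.ofReal r →
      (∫⁻ t, ENNReal.ofReal (θ |u t|) ∂μ) < ENNReal.ofReal r := by
    intro u r hr0 hr1 hlt
    obtain ⟨c, hc0, hcne, hcint, hclt⟩ := hNlt u _ hlt
    have hctR : 0 < c.toReal := ENNReal.toReal_pos hc0.ne' hcne
    have hctlt : c.toReal < r := (ENNReal.lt_ofReal_iff_toReal_lt hcne).1 hclt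
    calc (∫⁻ t, ENNReal.ofReal (θ |u t|) ∂μ)
        ≤ ENNReal.ofReal c.toReal * ∫⁻ t, ENNReal.ofReal (θ (|u t| / c.toReal)) ∂μ :=
          hBle u c.toReal hctR (le_of_lt (lt_of_lt_of_le hctlt hr1))
      _ ≤ ENNReal.ofReal c.toReal * 1 := by
          exact mul_le_mul_right hcint _
      _ = c := by rw [mul_one, ENNReal.ofReal_toReal hcne]
      _ < ENNReal.ofReal r := hclt
  -- modular = 1 implies norm = 1
  have hNB1 : ∀ u : T → ℝ, (∫⁻ t, ENNReal.ofReal (θ |u t|) ∂μ) = 1 →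
      luxNorm θ μ u = 1 := by
    intro u hu
    have hle : luxNorm θ μ u ≤ 1 := by
      have := hNle u 1 one_pos (by simpa [div_one] using hu.le)
      simpa using this
    refine le_antisymm hle ?_
    by_contra hlt
    push_neg at hlt
    have h1 : luxNorm θ μ u < ENNReal.ofReal 1 := by simpa using hlt
    have := hmodlt u 1 one_pos le_rfl h1
    rw [hu] at this
    simp at this
  -- norm = 1 implies modular ≤ 1 (uses Δ₂)
  have hints : ∀ u : T → ℝ, luxNorm θ μ u = 1 → ∀ l : ℝ, 1 < l →
      (∫⁻ t, ENNReal.ofReal (θ (|u t| / l)) ∂μ) ≤ 1 := by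
    intro u hu l hl
    have hl0 : (0:ℝ) < l := lt_trans one_pos hl
    have hlt : luxNorm θ μ u < ENNReal.ofReal l := by
      rw [hu]
      calc (1:ENNReal) = ENNReal.ofReal 1 := ENNReal.ofReal_one.symm
        _ < ENNReal.ofReal l := (ENNReal.ofReal_lt_ofReal_iff hl0).2 hl
    obtain ⟨c, hc0, hcne, hcint, hclt⟩ := hNlt u _ hlt
    have hctR : 0 < c.toReal := ENNReal.toReal_pos hc0.ne' hcne
    have hctlt : c.toReal < l := (ENNReal.lt_ofReal_iff_toReal_lt hcne).1 hclt
    refine le_trans (lintegral_mono fun t => ?_) hcint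
    apply ENNReal.ofReal_le_ofReal
    apply tmono (by positivity)
    gcongr
  have hBle1 : ∀ u : T → ℝ, Measurable u → luxNorm θ μ u = 1 →
      (∫⁻ t, ENNReal.ofReal (θ |u t|) ∂μ) ≤ 1 := by
    intro u hu hN
    set B := ∫⁻ t, ENNReal.ofReal (θ |u t|) ∂μ with hBdef
    have hfin : B ≤ ENNReal.ofReal K := by
      have h2 : (∫⁻ t, ENNReal.ofReal (θ (|u t| / 2)) ∂μ) ≤ 1 := hints u hN 2 one_lt_two
      calc B ≤ ENNReal.ofReal K * ∫⁻ t, ENNReal.ofReal (θ (|u t| / 2)) ∂μ := by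
            rw [← lintegral_const_mul' _ _ ENNReal.ofReal_ne_top]
            refine lintegral_mono fun t => ?_
            rw [← ENNReal.ofReal_mul hK0.le]
            apply ENNReal.ofReal_le_ofReal
            have heq : 2 * (|u t| / 2) = |u t| := by ring
            calc θ (|u t|) = θ (2 * (|u t| / 2)) := by rw [heq]
              _ ≤ K * θ (|u t| / 2) := hK _ (by positivity)
        _ ≤ ENNReal.ofReal K * 1 := mul_le_mul_right h2 _
        _ = ENNReal.ofReal K := mul_one _
    have hBne : B ≠ ⊤ := ne_top_of_le_ne_top ENNReal.ofReal_ne_top hfin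
    have hstep : ∀ e : ℝ, 0 < e → e ≤ 1/2 →
        B ≤ 1 + ENNReal.ofReal (e * (K - 1)) * B := by
      intro e he0 he2
      set l : ℝ := 1 / (1 - e) with hldef
      have h1e : (0:ℝ) < 1 - e := by linarith
      have hl1 : 1 < l := by
        rw [hldef]
        rw [lt_div_iff₀ h1e]
        linarith
      have hintl := hints u hN l hl1
      have hpt : ∀ t : T, ENNReal.ofReal (θ |u t|)
          ≤ ENNReal.ofReal (θ (|u t| / l)) + ENNReal.ofReal (e * (K - 1)) * ENNReal.ofReal (θ |u t|) := by
        intro t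
        have habs : (0:ℝ) ≤ |u t| := abs_nonneg _
        have hkey := tnear (l := 1 - e) (s := |u t|) h1e.le (by linarith) habs
        have hdiv : (1 - e) * |u t| = |u t| / l := by
          rw [hldef]
          field_simp
        rw [hdiv] at hkey
        have h1 : 0 ≤ θ (|u t| / l) := tnn (by positivity)
        have h2 : 0 ≤ (1 - (1 - e)) * (K - 1) * θ |u t| := by
          have h3 := tnn habs
          have h4 : (1 - (1 - e)) * (K - 1) * θ |u t| = e * ((K - 1) * θ |u t|) := by ring
          rw [h4]
          exact mul_nonneg he0.le (mul_nonneg (by linarith) h3)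
        calc ENNReal.ofReal (θ |u t|)
            ≤ ENNReal.ofReal (θ (|u t| / l) + (1 - (1 - e)) * (K - 1) * θ |u t|) :=
              ENNReal.ofReal_le_ofReal hkey
          _ = ENNReal.ofReal (θ (|u t| / l)) + ENNReal.ofReal ((1 - (1 - e)) * (K - 1) * θ |u t|) :=
              ENNReal.ofReal_add h1 h2
          _ = ENNReal.ofReal (θ (|u t| / l)) + ENNReal.ofReal (e * (K - 1)) * ENNReal.ofReal (θ |u t|) := by
              rw [← ENNReal.ofReal_mul (by nlinarith)]
              ring_nf
      calc B ≤ ∫⁻ t, (ENNReal.ofReal (θ (|u t| / l))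
            + ENNReal.ofReal (e * (K - 1)) * ENNReal.ofReal (θ |u t|)) ∂μ :=
            lintegral_mono hpt
        _ = (∫⁻ t, ENNReal.ofReal (θ (|u t| / l)) ∂μ)
            + ∫⁻ t, ENNReal.ofReal (e * (K - 1)) * ENNReal.ofReal (θ |u t|) ∂μ :=
            lintegral_add_left (hθmeas' u hu l (lt_trans one_pos hl1)) _
        _ = (∫⁻ t, ENNReal.ofReal (θ (|u t| / l)) ∂μ) + ENNReal.ofReal (e * (K - 1)) * B := by
            rw [lintegral_const_mul' _ _ ENNReal.ofReal_ne_top]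
        _ ≤ 1 + ENNReal.ofReal (e * (K - 1)) * B := by
            exact add_le_add_left hintl _
    -- convert to reals
    have hreal : ∀ e : ℝ, 0 < e → e ≤ 1/2 → B.toReal ≤ 1 + e * ((K - 1) * B.toReal) := by
      intro e he0 he2
      have h := hstep e he0 he2
      have hrne : (1 : ENNReal) + ENNReal.ofReal (e * (K - 1)) * B ≠ ⊤ := by
        apply ENNReal.add_ne_top.2
        exact ⟨ENNReal.one_ne_top, ENNReal.mul_ne_top ENNReal.ofReal_ne_top hBne⟩
      have := ENNReal.toReal_mono hrne h
      rw [ENNReal.toReal_add ENNReal.one_ne_top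
        (ENNReal.mul_ne_top ENNReal.ofReal_ne_top hBne), ENNReal.toReal_mul,
        ENNReal.toReal_ofReal (by nlinarith), ENNReal.toReal_one] at this
      linarith
    have hbR : B.toReal ≤ 1 := by
      refine aux_le_one (C := (K - 1) * B.toReal) ?_ hreal
      have := ENNReal.toReal_nonneg (a := B)
      nlinarith
    calc B = ENNReal.ofReal B.toReal := (ENNReal.ofReal_toReal hBne).symm
      _ ≤ ENNReal.ofReal 1 := ENNReal.ofReal_le_ofReal hbR
      _ = 1 := ENNReal.ofReal_one
  -- norm = 1 implies modular ≥ 1 (uses Δ₂)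
  have hBN1 : ∀ u : T → ℝ, Measurable u → luxNorm θ μ u = 1 →
      (∫⁻ t, ENNReal.ofReal (θ |u t|) ∂μ) = 1 := by
    intro u hu hN
    refine le_antisymm (hBle1 u hu hN) ?_
    by_contra hlt
    push_neg at hlt
    set B := ∫⁻ t, ENNReal.ofReal (θ |u t|) ∂μ with hBdef
    have hBne : B ≠ ⊤ := ne_top_of_le_ne_top ENNReal.one_ne_top hlt.le
    set b : ℝ := B.toReal with hbdef
    have hb0 : 0 ≤ b := ENNReal.toReal_nonneg
    have hb1 : b < 1 := by
      have := ENNReal.toReal_mono ENNReal.one_ne_top hlt.le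
      rw [ENNReal.toReal_one] at this
      rcases lt_or_eq_of_le this with h | h
      · exact h
      · exfalso
        have : B = 1 := by
          rw [← ENNReal.ofReal_toReal hBne, h, ENNReal.ofReal_one]
        rw [this] at hlt
        exact lt_irrefl _ hlt
    set l : ℝ := min 2 (1 + (1 - b) / K ^ 2) with hldef
    have hl1 : 1 < l := by
      apply lt_min one_lt_two
      have : 0 < (1 - b) / K ^ 2 := div_pos (by linarith) (by positivity)
      linarith
    have hl2 : l ≤ 2 := min_le_left _ _
    have hlK : (l - 1) * K ^ 2 ≤ 1 - b := by
      have : l ≤ 1 + (1 - b) / K ^ 2 := min_le_right _ _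
      have h2 : l - 1 ≤ (1 - b) / K ^ 2 := by linarith
      calc (l - 1) * K ^ 2 ≤ ((1 - b) / K ^ 2) * K ^ 2 :=
            mul_le_mul_of_nonneg_right h2 (by positivity)
        _ = 1 - b := by field_simp
    have hintl : (∫⁻ t, ENNReal.ofReal (θ (l * |u t|)) ∂μ) ≤ 1 := by
      calc (∫⁻ t, ENNReal.ofReal (θ (l * |u t|)) ∂μ)
          ≤ ENNReal.ofReal (1 + (l - 1) * K ^ 2) * B := by
            rw [← lintegral_const_mul' _ _ ENNReal.ofReal_ne_top]
            refine lintegral_mono fun t => ?_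
            rw [← ENNReal.ofReal_mul (by nlinarith)]
            exact ENNReal.ofReal_le_ofReal (tabove hl1.le hl2 (abs_nonneg _))
        _ = ENNReal.ofReal ((1 + (l - 1) * K ^ 2) * b) := by
            rw [← ENNReal.ofReal_toReal hBne, ← ENNReal.ofReal_mul (by nlinarith)]
        _ ≤ ENNReal.ofReal 1 := ENNReal.ofReal_le_ofReal (by nlinarith)
        _ = 1 := ENNReal.ofReal_one
    have hmem : luxNorm θ μ u ≤ ENNReal.ofReal (1 / l) := by
      apply hNle u (1 / l) (by positivity)
      have heq : (fun t => ENNReal.ofReal (θ (|u t| / (1 / l))))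
          = fun t => ENNReal.ofReal (θ (l * |u t|)) := by
        funext t
        congr 1
        congr 1
        field_simp
      rw [heq]
      exact hintl
    rw [hN] at hmem
    have : ENNReal.ofReal (1 / l) < 1 :=
      ENNReal.ofReal_lt_one.2 (by rw [div_lt_one (lt_trans one_pos hl1)]; exact hl1)
    exact absurd (lt_of_le_of_lt hmem this) (lt_irrefl _)
  -- modular lower bound from norm lower bound (strict non-membership)
  have hNgt : ∀ (u : T → ℝ) (c : ℝ), 0 < c →
      ENNReal.ofReal c < luxNorm θ μ u →
      1 < ∫⁻ t, ENNReal.ofReal (θ (|u t| / c)) ∂μ := by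
    intro u c hc hlt
    by_contra hle
    push_neg at hle
    have hmem : luxNorm θ μ u ≤ ENNReal.ofReal c := hNle u c hc hle
    exact absurd (lt_of_lt_of_le hlt hmem) (lt_irrefl _)
  -- MAIN EQUIVALENCE
  constructor
  · -- norm LUR → modular LUR
    intro hnorm f hf hBf ε hε
    have hNf : luxNorm θ μ f = 1 := hNB1 f hBf
    set ε' : ℝ := min ε 1 with hε'def
    have hε'0 : 0 < ε' := lt_min hε one_pos
    have hε'1 : ε' ≤ 1 := min_le_right _ _
    obtain ⟨δ, hδ0, hδ1, hδg⟩ := hnorm f hf hNf ε' hε'0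
    refine ⟨δ / 2, by linarith, by linarith, ?_⟩
    intro g hg hBg hεB
    have hNg : luxNorm θ μ g = 1 := hNB1 g hBg
    have hnormlow : ENNReal.ofReal ε' ≤ luxNorm θ μ (fun t => f t - g t) := by
      by_contra hc
      push_neg at hc
      have := hmodlt (fun t => f t - g t) ε' hε'0 hε'1 hc
      have h2 : ENNReal.ofReal ε ≤ ENNReal.ofReal ε' := le_trans hεB this.le
      have h3 : ENNReal.ofReal ε' ≤ ENNReal.ofReal ε :=
        ENNReal.ofReal_le_ofReal (min_le_left _ _)
      have h4 : ENNReal.ofReal ε ≤ ENNReal.ofReal ε := le_trans hεB (le_of_lt this) |>.trans h3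
      exact absurd (lt_of_lt_of_le this (le_trans h3 hεB)) (lt_irrefl _)
    have hmid := hδg g hg hNg hnormlow
    have hlt2 : luxNorm θ μ (fun t => (f t + g t) / 2) < ENNReal.ofReal (1 - δ / 2) := by
      refine lt_of_le_of_lt hmid ?_
      exact (ENNReal.ofReal_lt_ofReal_iff (by linarith)).2 (by linarith)
    exact (hmodlt (fun t => (f t + g t) / 2) (1 - δ / 2) (by linarith) (by linarith) hlt2).le
  · -- modular LUR → norm LUR
    intro hmod f hf hNf ε hε
    have hBf : (∫⁻ t, ENNReal.ofReal (θ |f t|) ∂μ) = 1 := hBN1 f hf hNf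
    set c : ℝ := min ε 1 / 2 with hcdef
    have hc0 : 0 < c := by
      have : 0 < min ε 1 := lt_min hε one_pos
      positivity
    have hcε : c < ε := by
      have h1 : min ε 1 ≤ ε := min_le_left _ _
      have : 0 < min ε 1 := lt_min hε one_pos
      rw [hcdef]
      linarith
    have hc1 : c ≤ 1 := by
      have : min ε 1 ≤ 1 := min_le_right _ _
      rw [hcdef]; linarith
    obtain ⟨m, hm⟩ := pow_unbounded_of_one_lt (1 / c) (one_lt_two (α := ℝ))
    have hmc : 1 ≤ 2 ^ m * c := by
      have := mul_lt_mul_of_pos_right hm hc0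
      rw [div_mul_cancel₀ 1 hc0.ne'] at this
      linarith
    set η : ℝ := 1 / K ^ m with hηdef
    have hη0 : 0 < η := by positivity
    obtain ⟨δ, hδ0, hδ1, hδg⟩ := hmod f hf hBf η hη0
    set l : ℝ := min 2 (1 + δ / K ^ 2) with hldef
    have hl1 : 1 < l := by
      apply lt_min one_lt_two
      have : 0 < δ / K ^ 2 := div_pos hδ0 (by positivity)
      linarith
    have hl0 : (0:ℝ) < l := lt_trans one_pos hl1
    have hl2 : l ≤ 2 := min_le_left _ _
    have hlK : (l - 1) * K ^ 2 ≤ δ := by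
      have h1 : l ≤ 1 + δ / K ^ 2 := min_le_right _ _
      have h2 : l - 1 ≤ δ / K ^ 2 := by linarith
      calc (l - 1) * K ^ 2 ≤ (δ / K ^ 2) * K ^ 2 :=
            mul_le_mul_of_nonneg_right h2 (by positivity)
        _ = δ := by field_simp
    set δ' : ℝ := 1 - 1 / l with hδ'def
    have hδ'0 : 0 < δ' := by
      rw [hδ'def]
      have : 1 / l < 1 := by rw [div_lt_one hl0]; exact hl1
      linarith
    have hδ'1 : δ' < 1 := by
      rw [hδ'def]
      have : 0 < 1 / l := by positivity
      linarith
    refine ⟨δ', hδ'0, hδ'1, ?_⟩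
    intro g hg hNg hεN
    have hBg : (∫⁻ t, ENNReal.ofReal (θ |g t|) ∂μ) = 1 := hBN1 g hg hNg
    -- modular lower bound for f - g
    have hBfg : ENNReal.ofReal η ≤ ∫⁻ t, ENNReal.ofReal (θ |f t - g t|) ∂μ := by
      have hclt : ENNReal.ofReal c < luxNorm θ μ (fun t => f t - g t) :=
        lt_of_lt_of_le ((ENNReal.ofReal_lt_ofReal_iff hε).2 hcε) hεN
      have hgt := hNgt (fun t => f t - g t) c hc0 hclt
      have hscale : (∫⁻ t, ENNReal.ofReal (θ (|f t - g t| / c)) ∂μ)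
          ≤ ENNReal.ofReal (K ^ m) * ∫⁻ t, ENNReal.ofReal (θ |f t - g t|) ∂μ := by
        rw [← lintegral_const_mul' _ _ ENNReal.ofReal_ne_top]
        refine lintegral_mono fun t => ?_
        rw [← ENNReal.ofReal_mul (by positivity)]
        apply ENNReal.ofReal_le_ofReal
        have hceq : c * (|f t - g t| / c) = |f t - g t| := by field_simp
        have := tlow c (|f t - g t| / c) m hc0 hmc (by positivity)
        rwa [hceq] at this
      by_contra hcon
      push_neg at hcon
      have hlt2 : ENNReal.ofReal (K ^ m) * (∫⁻ t, ENNReal.ofReal (θ |f t - g t|) ∂μ)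
          < ENNReal.ofReal (K ^ m) * ENNReal.ofReal η := by
        rw [ENNReal.mul_lt_mul_iff_right (by simp [ENNReal.ofReal_pos.2 (by positivity : (0:ℝ) < K ^ m)]; positivity) ENNReal.ofReal_ne_top]
        exact hcon
      have heq1 : ENNReal.ofReal (K ^ m) * ENNReal.ofReal η = 1 := by
        rw [← ENNReal.ofReal_mul (by positivity), hηdef]
        rw [mul_one_div, div_self (by positivity : (K:ℝ) ^ m ≠ 0)]
        exact ENNReal.ofReal_one
      have : (1:ENNReal) < 1 :=
        lt_of_lt_of_le hgt (le_trans hscale (le_trans hlt2.le heq1.le))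
      exact absurd this (lt_irrefl _)
    have hmid := hδg g hg hBg hBfg
    -- conclude norm bound for midpoint
    have hintl : (∫⁻ t, ENNReal.ofReal (θ (l * |(f t + g t) / 2|)) ∂μ) ≤ 1 := by
      calc (∫⁻ t, ENNReal.ofReal (θ (l * |(f t + g t) / 2|)) ∂μ)
          ≤ ENNReal.ofReal (1 + (l - 1) * K ^ 2)
            * ∫⁻ t, ENNReal.ofReal (θ (|(f t + g t) / 2|)) ∂μ := by
            rw [← lintegral_const_mul' _ _ ENNReal.ofReal_ne_top]
            refine lintegral_mono fun t => ?_
            rw [← ENNReal.ofReal_mul (by nlinarith)]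
            exact ENNReal.ofReal_le_ofReal (tabove hl1.le hl2 (abs_nonneg _))
        _ ≤ ENNReal.ofReal (1 + (l - 1) * K ^ 2) * ENNReal.ofReal (1 - δ) :=
            mul_le_mul_right hmid _
        _ = ENNReal.ofReal ((1 + (l - 1) * K ^ 2) * (1 - δ)) :=
            (ENNReal.ofReal_mul (by nlinarith)).symm
        _ ≤ ENNReal.ofReal 1 := ENNReal.ofReal_le_ofReal (by nlinarith)
        _ = 1 := ENNReal.ofReal_one
    have hfinal : luxNorm θ μ (fun t => (f t + g t) / 2) ≤ ENNReal.ofReal (1 / l) := by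
      apply hNle _ (1 / l) (by positivity)
      have heq : (fun t => ENNReal.ofReal (θ (|(f t + g t) / 2| / (1 / l))))
          = fun t => ENNReal.ofReal (θ (l * |(f t + g t) / 2|)) := by
        funext t
        congr 1
        congr 1
        field_simp
      rw [heq]
      exact hintl
    have : ENNReal.ofReal (1 / l) = ENNReal.ofReal (1 - δ') := by
      rw [hδ'def]
      norm_num
    rwa [this] at hfinal
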